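/- The map J φ = z̄·conj(φ) is a well-defined antilinear bijection from ker S_{a,b} onto ker S_{b̄,ā}; equivalently, conj(ker S_{a,b}) = z·ker S_{b̄,ā}. -/

import Mathlib

open MeasureTheory Complex Real AddCircle
open scoped ENNReal ComplexConjugate

noncomputable section

instance : Fact (0 < 2 * π) := ⟨by positivity⟩

/-- Normalized Haar (Lebesgue) measure on the unit circle, realized as `AddCircle (2π)`. -/
abbrev μT : Measure (AddCircle (2 * π)) := AddCircle.haarAddCircle

/-- The Lebesgue space `L²(𝕋)`. -/
abbrev L2 : Type := Lp ℂ 2 μT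

/-- The space `L^∞(𝕋)`. -/
abbrev Linf : Type := Lp ℂ ∞ μT

/-- Multiplication of an `L²` function by an `L^∞` function, as an element of `L²`. -/
def mul2 (a : Linf) (f : L2) : L2 :=
  ((Lp.memLp f).smul (Lp.memLp a)).toLp ((a : AddCircle (2 * π) → ℂ) • (f : AddCircle (2 * π) → ℂ))

lemma mul2_coe (a : Linf) (f : L2) :
    (mul2 a f : AddCircle (2 * π) → ℂ) =ᵐ[μT] fun x => a x * f x :=
  (MemLp.coeFn_toLp _)

/-- Multiplication in `L^∞`. -/
def mulInf (a b : Linf) : Linf :=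
  ((Lp.memLp b).smul (Lp.memLp a)).toLp ((a : AddCircle (2 * π) → ℂ) • (b : AddCircle (2 * π) → ℂ))

lemma mulInf_coe (a b : Linf) :
    (mulInf a b : AddCircle (2 * π) → ℂ) =ᵐ[μT] fun x => a x * b x :=
  (MemLp.coeFn_toLp _)

/-- Complex conjugation on `Lp`. -/
def conjLp {p : ℝ≥0∞} [Fact (1 ≤ p)] (f : Lp ℂ p μT) : Lp ℂ p μT :=
  MemLp.toLp (fun x => conj (f x))
    ⟨continuous_star.comp_aestronglyMeasurable (Lp.aestronglyMeasurable f),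
      by
        rw [eLpNorm_congr_norm_ae (g := (f : AddCircle (2 * π) → ℂ))
          (Filter.Eventually.of_forall fun x => by simp)]
        exact (Lp.memLp f).2⟩

lemma conjLp_coe {p : ℝ≥0∞} [Fact (1 ≤ p)] (f : Lp ℂ p μT) :
    (conjLp f : AddCircle (2 * π) → ℂ) =ᵐ[μT] fun x => conj (f x) :=
  (MemLp.coeFn_toLp _)

/-- The Hardy space `H²`, as the subspace of `L²(𝕋)` of functions whose negative Fourier
coefficients vanish. -/
def Hardy : Submodule ℂ L2 where
  carrier := {f | ∀ n : ℤ, n < 0 → fourierBasis.repr f n = 0}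
  add_mem' := fun hf hg n hn => by simp [hf n hn, hg n hn]
  zero_mem' := fun n hn => by simp
  smul_mem' := fun c f hf n hn => by simp [hf n hn]

lemma hardy_isClosed : IsClosed (Hardy : Set L2) := by
  have h : (Hardy : Set L2)
      = ⋂ n : ℤ, ⋂ _ : n < 0, {f : L2 | fourierBasis.repr f n = 0} := by
    ext f
    simp [Hardy, Set.mem_iInter]
  rw [h]
  refine isClosed_iInter fun n => isClosed_iInter fun hn => ?_
  have hc : Continuous fun f : L2 => fourierBasis.repr f n := by
    have : (fun f : L2 => fourierBasis.repr f n)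
        = fun f : L2 => (innerSL ℂ (fourierBasis n : L2)) f := by
      ext f
      rw [HilbertBasis.repr_apply_apply]
      rfl
    rw [this]
    exact (innerSL ℂ (fourierBasis n : L2)).continuous
  exact isClosed_eq hc continuous_const

instance : CompleteSpace Hardy := hardy_isClosed.completeSpace_coe

/-- The Riesz projection `P⁺ : L² → L²`, i.e. the orthogonal projection onto `H²`. -/
def Pplus : L2 →L[ℂ] L2 := Hardy.subtypeL.comp Hardy.orthogonalProjectionOnto

/-- The complementary projection `P⁻ = I - P⁺`. -/
def Pminus : L2 →L[ℂ] L2 := ContinuousLinearMap.id ℂ L2 - Pplus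

lemma mul2_norm_le (a : Linf) (f : L2) : ‖mul2 a f‖ ≤ ‖a‖ * ‖f‖ := by
  rw [mul2, Lp.norm_toLp]
  have h := eLpNorm_smul_le_eLpNorm_top_mul_eLpNorm 2
    (Lp.aestronglyMeasurable f) (φ := (a : AddCircle (2 * π) → ℂ))
  refine le_trans (ENNReal.toReal_mono ?_ h) ?_
  · exact ENNReal.mul_ne_top (Lp.memLp a).2.ne (Lp.memLp f).2.ne
  · rw [ENNReal.toReal_mul, Lp.norm_def, Lp.norm_def]

/-- Multiplication by an `L^∞` function `a`, as a bounded operator `M_a` on `L²`. -/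
def Mult (a : Linf) : L2 →L[ℂ] L2 :=
  LinearMap.mkContinuous
    { toFun := mul2 a
      map_add' := fun f g => by
        refine Lp.ext ?_
        filter_upwards [mul2_coe a (f + g), mul2_coe a f, mul2_coe a g,
          Lp.coeFn_add f g, Lp.coeFn_add (mul2 a f) (mul2 a g)] with x h1 h2 h3 h4 h5
        simp only [h1, h5, Pi.add_apply, h2, h3, h4, mul_add]
      map_smul' := fun c f => by
        refine Lp.ext ?_
        filter_upwards [mul2_coe a (c • f), mul2_coe a f,
          Lp.coeFn_smul c f, Lp.coeFn_smul c (mul2 a f)] with x h1 h2 h3 h4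
        simp only [h1, h4, Pi.smul_apply, h2, h3, smul_eq_mul, RingHom.id_apply]
        ring }
    ‖a‖ (fun f => mul2_norm_le a f)

/-- The paired operator `S_{a,b} = a P⁺ + b P⁻` on `L²(𝕋)`. -/
def pairedS (a b : Linf) : L2 →L[ℂ] L2 :=
  (Mult a).comp Pplus + (Mult b).comp Pminus

/-- The transposed paired operator `Σ_{a,b} = P⁺ a + P⁻ b` on `L²(𝕋)`. -/
def pairedSigma (a b : Linf) : L2 →L[ℂ] L2 :=
  Pplus.comp (Mult a) + Pminus.comp (Mult b)

/-- Membership in `H^∞`: an `L^∞` function whose negative Fourier coefficients vanish. -/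
def MemHinf (a : Linf) : Prop := ∀ n : ℤ, n < 0 → fourierCoeff (a : AddCircle (2 * π) → ℂ) n = 0

/-- A pair `{a,b}` is nondegenerate if `a`, `b` and `a - b` are all nonzero a.e. on `𝕋`. -/
def Nondegenerate (a b : Linf) : Prop :=
  (∀ᵐ x ∂μT, a x ≠ 0) ∧ (∀ᵐ x ∂μT, b x ≠ 0) ∧ (∀ᵐ x ∂μT, a x - b x ≠ 0)


/-! ### Auxiliary lemmas -/

lemma fourierCoeff_congr_ae' {f g : AddCircle (2 * π) → ℂ} (h : f =ᵐ[μT] g) (n : ℤ) :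
    fourierCoeff f n = fourierCoeff g n := by
  unfold fourierCoeff
  exact integral_congr_ae (h.mono fun x hx => by simp only [hx])

lemma fourierCoeff_mul_conj (f : AddCircle (2 * π) → ℂ) (n : ℤ) :
    fourierCoeff (fun x => fourier (-1) x * conj (f x)) n = conj (fourierCoeff f (-1 - n)) := by
  unfold fourierCoeff
  have h1 : ∀ x : AddCircle (2 * π), fourier (-n) x • (fourier (-1) x * conj (f x))
      = conj (fourier (-(-1 - n)) x • f x) := by
    intro x
    simp only [smul_eq_mul, map_mul, ← fourier_neg]
    have : (-(-(-1 - n)) : ℤ) = -n + -1 := by ring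
    rw [this, fourier_add]
    ring
  simp_rw [h1]
  rw [integral_conj]

/-- The antilinear map `J f = z̄ · conj f`. -/
def Jmap (f : L2) : L2 := mul2 (fourierLp ⊤ (-1)) (conjLp f)

lemma Jmap_coe (f : L2) :
    (Jmap f : AddCircle (2 * π) → ℂ) =ᵐ[μT] fun x => fourier (-1) x * conj (f x) := by
  filter_upwards [mul2_coe (fourierLp ⊤ (-1)) (conjLp f), conjLp_coe f,
    coeFn_fourierLp ⊤ (-1)] with x h1 h2 h3
  rw [Jmap, h1, h2, h3]

lemma repr_Jmap (f : L2) (n : ℤ) :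
    fourierBasis.repr (Jmap f) n = conj (fourierBasis.repr f (-1 - n)) := by
  rw [fourierBasis_repr, fourierBasis_repr,
    fourierCoeff_congr_ae' (Jmap_coe f) n, fourierCoeff_mul_conj]

lemma fourierBasis_mem_hardy {m : ℤ} (hm : 0 ≤ m) : (fourierBasis m : L2) ∈ Hardy := by
  intro n hn
  rw [fourierBasis.repr_self]
  have : ¬ n = m := by omega
  simp [lp.single_apply, this]

lemma repr_Pplus (f : L2) (n : ℤ) :
    fourierBasis.repr (Pplus f) n = if n < 0 then 0 else fourierBasis.repr f n := by
  by_cases hn : n < 0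
  · simp only [hn, if_true]
    exact (Hardy.orthogonalProjectionOnto f).2 n hn
  · simp only [hn, if_false]
    have hperp : f - Pplus f ∈ Hardyᗮ := Submodule.sub_starProjection_mem_orthogonal (K := Hardy) f
    have h0 : fourierBasis.repr (f - Pplus f) n = 0 := by
      rw [fourierBasis.repr_apply_apply]
      exact Submodule.inner_right_of_mem_orthogonal
        (fourierBasis_mem_hardy (not_lt.mp hn)) hperp
    have := map_sub fourierBasis.repr f (Pplus f)
    have h2 : fourierBasis.repr (f - Pplus f) n
        = fourierBasis.repr f n - fourierBasis.repr (Pplus f) n := by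
      rw [this]; rfl
    rw [h2] at h0
    linear_combination -h0

lemma repr_Pminus (f : L2) (n : ℤ) :
    fourierBasis.repr (Pminus f) n = if n < 0 then fourierBasis.repr f n else 0 := by
  have h2 : fourierBasis.repr (Pminus f) n
      = fourierBasis.repr f n - fourierBasis.repr (Pplus f) n := by
    rw [Pminus, ContinuousLinearMap.sub_apply, map_sub]; rfl
  rw [h2, repr_Pplus]
  by_cases hn : n < 0 <;> simp [hn]

lemma repr_ext {f g : L2} (h : ∀ n, fourierBasis.repr f n = fourierBasis.repr g n) :
    f = g :=
  fourierBasis.repr.injective (lp.ext (funext h))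

lemma Pplus_Jmap (f : L2) : Pplus (Jmap f) = Jmap (Pminus f) := by
  refine repr_ext fun n => ?_
  rw [repr_Pplus, repr_Jmap, repr_Jmap, repr_Pminus]
  have : (-1 - n < 0) ↔ ¬ (n < 0) := by omega
  by_cases hn : n < 0 <;> simp [hn, this.mpr, this]

lemma Pminus_Jmap (f : L2) : Pminus (Jmap f) = Jmap (Pplus f) := by
  refine repr_ext fun n => ?_
  rw [repr_Pminus, repr_Jmap, repr_Jmap, repr_Pplus]
  have : (-1 - n < 0) ↔ ¬ (n < 0) := by omega
  by_cases hn : n < 0 <;> simp [hn, this.mpr, this]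

lemma Jmap_Jmap (f : L2) : Jmap (Jmap f) = f := by
  refine repr_ext fun n => ?_
  rw [repr_Jmap, repr_Jmap]
  have : (-1 - (-1 - n) : ℤ) = n := by ring
  rw [this]
  exact Complex.conj_conj _

lemma Jmap_injective : Function.Injective Jmap := by
  intro f g h
  have := congrArg Jmap h
  rwa [Jmap_Jmap, Jmap_Jmap] at this

lemma conjLp_conjLp {p : ℝ≥0∞} [Fact (1 ≤ p)] (f : Lp ℂ p μT) : conjLp (conjLp f) = f := by
  refine Lp.ext ?_
  filter_upwards [conjLp_coe (conjLp f), conjLp_coe f] with x h1 h2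
  rw [h1, h2]
  exact Complex.conj_conj _

lemma pairedS_apply (a b : Linf) (f : L2) :
    pairedS a b f = mul2 a (Pplus f) + mul2 b (Pminus f) := rfl

lemma pairedS_Jmap (a b : Linf) (f : L2) :
    pairedS (conjLp b) (conjLp a) (Jmap f) = Jmap (pairedS a b f) := by
  rw [pairedS_apply, pairedS_apply, Pplus_Jmap, Pminus_Jmap]
  refine Lp.ext ?_
  filter_upwards [Lp.coeFn_add (mul2 (conjLp b) (Jmap (Pminus f)))
      (mul2 (conjLp a) (Jmap (Pplus f))),
    mul2_coe (conjLp b) (Jmap (Pminus f)), mul2_coe (conjLp a) (Jmap (Pplus f)),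
    conjLp_coe b, conjLp_coe a, Jmap_coe (Pminus f), Jmap_coe (Pplus f),
    Jmap_coe (mul2 a (Pplus f) + mul2 b (Pminus f)),
    Lp.coeFn_add (mul2 a (Pplus f)) (mul2 b (Pminus f)),
    mul2_coe a (Pplus f), mul2_coe b (Pminus f)] with x h1 h2 h3 h4 h5 h6 h7 h8 h9 h10 h11
  rw [h1]
  simp only [Pi.add_apply, h2, h3, h4, h5, h6, h7, h8, h9, Pi.add_apply, h10, h11,
    map_add, map_mul]
  ring

lemma Jmap_zero : Jmap 0 = 0 := by
  refine repr_ext fun n => ?_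
  rw [repr_Jmap]
  simp

lemma mul2_e1_Jmap (f : L2) : conjLp f = mul2 (fourierLp ⊤ 1) (Jmap f) := by
  refine Lp.ext ?_
  filter_upwards [conjLp_coe f, mul2_coe (fourierLp ⊤ 1) (Jmap f), Jmap_coe f,
    coeFn_fourierLp ⊤ 1] with x h1 h2 h3 h4
  rw [h1, h2, h3, h4, ← mul_assoc, ← fourier_add]
  norm_num [fourier_zero]

lemma conjLp_Jmap (g : L2) : conjLp (Jmap g) = mul2 (fourierLp ⊤ 1) g := by
  refine Lp.ext ?_
  filter_upwards [conjLp_coe (Jmap g), Jmap_coe g, mul2_coe (fourierLp ⊤ 1) g,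
    coeFn_fourierLp ⊤ 1] with x h1 h2 h3 h4
  rw [h1, h2, h3, h4, map_mul, Complex.conj_conj, ← fourier_neg]
  norm_num

lemma Jmap_mem_ker {a b : Linf} {f : L2} (hf : pairedS a b f = 0) :
    pairedS (conjLp b) (conjLp a) (Jmap f) = 0 := by
  rw [pairedS_Jmap, hf, Jmap_zero]

/-- The map `J φ = z̄ · conj φ` is a (antilinear) bijection from `ker S_{a,b}` onto
`ker S_{b̄,ā}`; equivalently `conj (ker S_{a,b}) = z · ker S_{b̄,ā}`. -/
theorem statement18 (a b : Linf) :
    Set.BijOn (fun f : L2 => mul2 (fourierLp ⊤ (-1)) (conjLp f))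
        {f : L2 | pairedS a b f = 0} {g : L2 | pairedS (conjLp b) (conjLp a) g = 0}
    ∧ (fun f : L2 => conjLp f) '' {f : L2 | pairedS a b f = 0}
        = (fun g : L2 => mul2 (fourierLp ⊤ 1) g) ''
            {g : L2 | pairedS (conjLp b) (conjLp a) g = 0} := by
  have hback : ∀ g : L2, pairedS (conjLp b) (conjLp a) g = 0 → pairedS a b (Jmap g) = 0 := by
    intro g hg
    have := Jmap_mem_ker hg
    rwa [conjLp_conjLp, conjLp_conjLp] at this
  constructor
  · show Set.BijOn Jmap _ _
    refine ⟨fun f hf => Jmap_mem_ker hf, fun f _ g _ h => Jmap_injective h, fun g hg => ?_⟩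
    exact ⟨Jmap g, hback g hg, Jmap_Jmap g⟩
  · apply subset_antisymm
    · rintro _ ⟨f, hf, rfl⟩
      exact ⟨Jmap f, Jmap_mem_ker hf, (mul2_e1_Jmap f).symm⟩
    · rintro _ ⟨g, hg, rfl⟩
      exact ⟨Jmap g, hback g hg, conjLp_Jmap g⟩

end
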